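/- For every group G, either G admits a topologically transitive action on ℝ by orientation-preserving homeomorphisms, or every orientation-preserving action of G on ℝ has a wandering interval. -/
import Mathlib


/-- An orientation-preserving action `φ : G →* (ℝ ≃o ℝ)` is topologically transitive if for
all nonempty open `U, V ⊆ ℝ` there is `g` with `φ g (U) ∩ V ≠ ∅`. -/
def IsTopTransitive {G : Type*} [Group G] (φ : G →* (ℝ ≃o ℝ)) : Prop :=
  ∀ U V : Set ℝ, IsOpen U → IsOpen V → U.Nonempty → V.Nonempty →
    ∃ g : G, ((φ g '' U) ∩ V).Nonempty

/-- `(a, b)` is a wandering interval of `φ` if every group element either restricts to the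
identity on `(a, b)` or maps `(a, b)` off itself. -/
def HasWanderingInterval {G : Type*} [Group G] (φ : G →* (ℝ ≃o ℝ)) : Prop :=
  ∃ a b : ℝ, a < b ∧ ∀ g : G,
    (∀ x ∈ Set.Ioo a b, φ g x = x) ∨ (φ g '' Set.Ioo a b) ∩ Set.Ioo a b = ∅

namespace Stmt9Aux

open Set

variable {G : Type*} [Group G]

/-- `x` is a good point: its orbit accumulates on it from both sides. -/
def Good (φ : G →* (ℝ ≃o ℝ)) (x : ℝ) : Prop :=
  ∀ ε : ℝ, 0 < ε →
    (∃ g : G, φ g x ∈ Set.Ioo x (x + ε)) ∧ (∃ g : G, φ g x ∈ Set.Ioo (x - ε) x)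

lemma inv_apply (φ : G →* (ℝ ≃o ℝ)) (g : G) (z : ℝ) : φ g⁻¹ (φ g z) = z := by
  rw [map_inv]; exact (φ g).symm_apply_apply z

lemma apply_inv (φ : G →* (ℝ ≃o ℝ)) (g : G) (z : ℝ) : φ g (φ g⁻¹ z) = z := by
  rw [map_inv]; exact (φ g).apply_symm_apply z

lemma mul_apply' (φ : G →* (ℝ ≃o ℝ)) (g h : G) (z : ℝ) :
    φ (g * h) z = φ g (φ h z) := by
  rw [map_mul]; rfl

lemma le_of_rat_lt {a b : ℝ} (h : ∀ c : ℚ, (c : ℝ) < a → (c : ℝ) ≤ b) : a ≤ b := by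
  by_contra hh
  push_neg at hh
  obtain ⟨q, h1, h2⟩ := exists_rat_btwn hh
  linarith [h q h2]

section PartA

variable (φ : G →* (ℝ ≃o ℝ))

/-- The "locally rigid" property of the small interval extracted by Baire. -/
lemma key_rigid {c' d' : ℝ}
    (P : ∀ z ∈ Ioo c' d', ∀ g : G, φ g z ∈ Ioo c' d' → φ g z = z)
    (hcd : c' < d')
    (hnw : ∃ g : G, (∃ y ∈ Set.Ioo c' d', φ g y ≠ y) ∧
      ((φ g '' Set.Ioo c' d') ∩ Set.Ioo c' d').Nonempty) : False := by
  obtain ⟨g₀, ⟨y₀, hy₀I, hy₀ne⟩, w, ⟨x₀, hx₀I, hwx⟩, hwI⟩ := hnw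
  have hx₀fix : φ g₀ x₀ = x₀ := P x₀ hx₀I g₀ (by rwa [hwx])
  rcases lt_trichotomy x₀ y₀ with hlt | heq | hgt
  · -- x₀ < y₀ : take supremum of fixed points in [x₀, y₀]
    set K : Set ℝ := {z | z ∈ Icc x₀ y₀ ∧ φ g₀ z = z} with hK
    have hKc : IsClosed K := by
      have : K = Icc x₀ y₀ ∩ {z | φ g₀ z - z = 0} := by
        ext z; simp [hK, sub_eq_zero]
      rw [this]
      exact isClosed_Icc.inter
        (isClosed_eq ((OrderIso.continuous (φ g₀)).sub continuous_id) continuous_const)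
    have hKne : K.Nonempty := ⟨x₀, ⟨le_refl _, le_of_lt hlt⟩, hx₀fix⟩
    have hKbdd : BddAbove K := ⟨y₀, fun z hz => hz.1.2⟩
    set u := sSup K with hu
    have huK : u ∈ K := hKc.csSup_mem hKne hKbdd
    have huy : u < y₀ := lt_of_le_of_ne huK.1.2 (fun h => hy₀ne (h ▸ huK.2))
    have hufix : φ g₀ u = u := huK.2
    have huI : u ∈ Ioo c' d' := ⟨lt_of_lt_of_le hx₀I.1 huK.1.1, lt_of_le_of_lt huK.1.2 hy₀I.2⟩
    -- find y₁ ∈ (u, y₀) with φ g₀ y₁ ∈ I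
    have hclaim : ∃ y₁ ∈ Ioo u y₀, φ g₀ y₁ ∈ Ioo c' d' := by
      by_contra hcl
      push_neg at hcl
      have hlow : ∀ y₁ ∈ Ioo u y₀, d' ≤ φ g₀ y₁ := by
        intro y₁ hy₁
        have h1 : u < φ g₀ y₁ := by
          have := (φ g₀).strictMono hy₁.1
          rwa [hufix] at this
        have h2 : φ g₀ y₁ ∉ Ioo c' d' := hcl y₁ hy₁
        rcases le_or_gt d' (φ g₀ y₁) with h | h
        · exact h
        · exact absurd ⟨lt_trans huI.1 h1, h⟩ h2
      set w₀ := (u + y₀) / 2 with hw₀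
      have hw₀mem : w₀ ∈ Ioo u y₀ := ⟨by linarith, by linarith⟩
      have h1 : d' ≤ φ g₀ w₀ := hlow w₀ hw₀mem
      set ys := φ g₀⁻¹ w₀ with hys
      have hysu : u < ys := by
        have : φ g₀⁻¹ u < φ g₀⁻¹ w₀ := (φ g₀⁻¹).strictMono hw₀mem.1
        have hfix' : φ g₀⁻¹ u = u := by
          conv_lhs => rw [← hufix]
          exact inv_apply φ g₀ u
        rwa [hfix'] at this
      rcases lt_or_ge ys y₀ with h2 | h2
      · have : d' ≤ φ g₀ ys := hlow ys ⟨hysu, h2⟩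
        have : φ g₀ ys = w₀ := apply_inv φ g₀ w₀
        have : w₀ < d' := lt_trans hw₀mem.2 hy₀I.2
        linarith [hlow ys ⟨hysu, h2⟩, (apply_inv φ g₀ w₀ : φ g₀ ys = w₀)]
      · -- y₀ ≤ ys, then w₀ < ys so φ g₀ w₀ < φ g₀ ys = w₀ < d', contradiction
        have hwys : w₀ < ys := lt_of_lt_of_le hw₀mem.2 h2
        have : φ g₀ w₀ < φ g₀ ys := (φ g₀).strictMono hwys
        rw [apply_inv φ g₀ w₀] at this
        have : w₀ < d' := lt_trans hw₀mem.2 hy₀I.2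
        linarith [(φ g₀).strictMono hwys, (apply_inv φ g₀ w₀ : φ g₀ ys = w₀)]
    obtain ⟨y₁, hy₁mem, hy₁I⟩ := hclaim
    have hy₁inI : y₁ ∈ Ioo c' d' := ⟨lt_trans huI.1 hy₁mem.1, lt_trans hy₁mem.2 hy₀I.2⟩
    have : φ g₀ y₁ = y₁ := P y₁ hy₁inI g₀ hy₁I
    have : y₁ ∈ K := ⟨⟨le_of_lt (lt_of_le_of_lt huK.1.1 hy₁mem.1), le_of_lt hy₁mem.2⟩, this⟩
    have : y₁ ≤ u := le_csSup hKbdd this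
    linarith [hy₁mem.1]
  · exact hy₀ne (heq ▸ hx₀fix)
  · -- y₀ < x₀ : mirror, take infimum of fixed points in [y₀, x₀]
    set K : Set ℝ := {z | z ∈ Icc y₀ x₀ ∧ φ g₀ z = z} with hK
    have hKc : IsClosed K := by
      have : K = Icc y₀ x₀ ∩ {z | φ g₀ z - z = 0} := by
        ext z; simp [hK, sub_eq_zero]
      rw [this]
      exact isClosed_Icc.inter
        (isClosed_eq ((OrderIso.continuous (φ g₀)).sub continuous_id) continuous_const)
    have hKne : K.Nonempty := ⟨x₀, ⟨le_of_lt hgt, le_refl _⟩, hx₀fix⟩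
    have hKbdd : BddBelow K := ⟨y₀, fun z hz => hz.1.1⟩
    set v := sInf K with hv
    have hvK : v ∈ K := hKc.csInf_mem hKne hKbdd
    have hyv : y₀ < v := by
      rcases lt_or_eq_of_le hvK.1.1 with h | h
      · exact h
      · exact absurd (h ▸ hvK.2) hy₀ne
    have hvfix : φ g₀ v = v := hvK.2
    have hvI : v ∈ Ioo c' d' := ⟨lt_of_lt_of_le hy₀I.1 hvK.1.1, lt_of_le_of_lt hvK.1.2 hx₀I.2⟩
    have hclaim : ∃ y₁ ∈ Ioo y₀ v, φ g₀ y₁ ∈ Ioo c' d' := by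
      by_contra hcl
      push_neg at hcl
      have hup : ∀ y₁ ∈ Ioo y₀ v, φ g₀ y₁ ≤ c' := by
        intro y₁ hy₁
        have h1 : φ g₀ y₁ < v := by
          have := (φ g₀).strictMono hy₁.2
          rwa [hvfix] at this
        have h2 : φ g₀ y₁ ∉ Ioo c' d' := hcl y₁ hy₁
        rcases le_or_gt (φ g₀ y₁) c' with h | h
        · exact h
        · exact absurd ⟨h, lt_trans h1 hvI.2⟩ h2
      set w₀ := (y₀ + v) / 2 with hw₀
      have hw₀mem : w₀ ∈ Ioo y₀ v := ⟨by linarith, by linarith⟩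
      have h1 : φ g₀ w₀ ≤ c' := hup w₀ hw₀mem
      set ys := φ g₀⁻¹ w₀ with hys
      have hysv : ys < v := by
        have : φ g₀⁻¹ w₀ < φ g₀⁻¹ v := (φ g₀⁻¹).strictMono hw₀mem.2
        have hfix' : φ g₀⁻¹ v = v := by
          conv_lhs => rw [← hvfix]
          exact inv_apply φ g₀ v
        rwa [hfix'] at this
      rcases lt_or_ge y₀ ys with h2 | h2
      · have h3 : φ g₀ ys ≤ c' := hup ys ⟨h2, hysv⟩
        have h4 : φ g₀ ys = w₀ := apply_inv φ g₀ w₀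
        have : c' < w₀ := lt_trans hy₀I.1 hw₀mem.1
        linarith [h4 ▸ h3]
      · have hysw : ys < w₀ := lt_of_le_of_lt h2 hw₀mem.1
        have h3 : φ g₀ ys < φ g₀ w₀ := (φ g₀).strictMono hysw
        rw [apply_inv φ g₀ w₀] at h3
        have : c' < w₀ := lt_trans hy₀I.1 hw₀mem.1
        linarith
    obtain ⟨y₁, hy₁mem, hy₁I⟩ := hclaim
    have hy₁inI : y₁ ∈ Ioo c' d' := ⟨lt_trans hy₀I.1 hy₁mem.1, lt_trans hy₁mem.2 hvI.2⟩
    have hfix : φ g₀ y₁ = y₁ := P y₁ hy₁inI g₀ hy₁I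
    have hmem : y₁ ∈ K := ⟨⟨le_of_lt hy₁mem.1, le_of_lt (lt_of_lt_of_le hy₁mem.2 hvK.1.2)⟩, hfix⟩
    have : v ≤ y₁ := csInf_le hKbdd hmem
    linarith [hy₁mem.2]
/-- Baire category: if there is no good point, we find a rigid interval and contradict
non-wandering. -/
lemma exists_good
    (hnw : ∀ a b : ℝ, a < b → ∃ g : G, (∃ y ∈ Set.Ioo a b, φ g y ≠ y) ∧
      ((φ g '' Set.Ioo a b) ∩ Set.Ioo a b).Nonempty) :
    ∃ x : ℝ, Good φ x := by
  by_contra hno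
  push_neg at hno
  -- every point is "bad"
  have hbad : ∀ x : ℝ, ∃ ε : ℝ, 0 < ε ∧
      ((∀ g : G, φ g x ∉ Ioo x (x + ε)) ∨ (∀ g : G, φ g x ∉ Ioo (x - ε) x)) := by
    intro x
    by_contra hc
    push_neg at hc
    refine hno x ?_
    intro ε hε
    obtain ⟨h1, h2⟩ := hc ε hε
    obtain ⟨g1, hg1⟩ := h1
    obtain ⟨g2, hg2⟩ := h2
    exact ⟨⟨g1, hg1⟩, ⟨g2, hg2⟩⟩
  -- closed pieces
  set Bp : ℕ → Set ℝ := fun n => ⋂ g : G, {z : ℝ | φ g z ∉ Ioo z (z + 1 / ((n : ℝ) + 1))}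
    with hBp
  set Bm : ℕ → Set ℝ := fun n => ⋂ g : G, {z : ℝ | φ g z ∉ Ioo (z - 1 / ((n : ℝ) + 1)) z}
    with hBm
  set B : ℕ ⊕ ℕ → Set ℝ := Sum.elim Bp Bm with hBdef
  have hBc : ∀ i, IsClosed (B i) := by
    rintro (n | n)
    · refine isClosed_iInter (fun g => ?_)
      have : {z : ℝ | φ g z ∉ Ioo z (z + 1 / ((n : ℝ) + 1))} =
          ((fun z => φ g z - z) ⁻¹' Ioo 0 (1 / ((n : ℝ) + 1)))ᶜ := by
        ext z
        simp only [mem_compl_iff, mem_preimage, mem_Ioo, mem_setOf_eq, sub_pos]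
        constructor
        · intro h hc; exact h ⟨hc.1, by linarith [hc.2]⟩
        · intro h hc; exact h ⟨hc.1, by linarith [hc.2]⟩
      rw [this]
      exact (isOpen_Ioo.preimage ((OrderIso.continuous (φ g)).sub continuous_id)).isClosed_compl
    · refine isClosed_iInter (fun g => ?_)
      have : {z : ℝ | φ g z ∉ Ioo (z - 1 / ((n : ℝ) + 1)) z} =
          ((fun z => z - φ g z) ⁻¹' Ioo 0 (1 / ((n : ℝ) + 1)))ᶜ := by
        ext z
        simp only [mem_compl_iff, mem_preimage, mem_Ioo, mem_setOf_eq, sub_pos]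
        constructor
        · intro h hc; exact h ⟨by linarith [hc.2], hc.1⟩
        · intro h hc; exact h ⟨hc.2, by linarith [hc.1]⟩
      rw [this]
      exact (isOpen_Ioo.preimage (continuous_id.sub (OrderIso.continuous (φ g)))).isClosed_compl
  have hcover : ⋃ i, B i = univ := by
    apply eq_univ_of_forall
    intro x
    obtain ⟨ε, hε, hx⟩ := hbad x
    obtain ⟨n, hn⟩ := exists_nat_one_div_lt hε
    rw [mem_iUnion]
    rcases hx with h | h
    · refine ⟨Sum.inl n, ?_⟩
      simp only [hBdef, Sum.elim_inl, hBp, mem_iInter, mem_setOf_eq]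
      intro g hg
      exact h g ⟨hg.1, by linarith [hg.2, hn]⟩
    · refine ⟨Sum.inr n, ?_⟩
      simp only [hBdef, Sum.elim_inr, hBm, mem_iInter, mem_setOf_eq]
      intro g hg
      exact h g ⟨by linarith [hg.1, hn], hg.2⟩
  obtain ⟨i₀, hint⟩ := nonempty_interior_of_iUnion_of_closed hBc hcover
  obtain ⟨y, hy⟩ := hint
  set n₀ : ℕ := Sum.elim id id i₀ with hn₀
  set ε₀ : ℝ := 1 / ((n₀ : ℝ) + 1) with hε₀
  have hε₀pos : 0 < ε₀ := by positivity
  obtain ⟨r, hr, hball⟩ := Metric.isOpen_iff.1 isOpen_interior y hy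
  have hball' : Ioo (y - r) (y + r) ⊆ B i₀ := by
    rw [← Real.ball_eq_Ioo]
    exact hball.trans interior_subset
  set δ := min (r / 2) (ε₀ / 4) with hδ
  have hδpos : 0 < δ := lt_min (by linarith) (by linarith)
  set c' := y - δ with hc'
  set d' := y + δ with hd'
  have hc'd' : c' < d' := by simp only [hc', hd']; linarith
  have hsub : Ioo c' d' ⊆ B i₀ := by
    intro z hz
    apply hball'
    have h1 : δ ≤ r / 2 := min_le_left _ _
    exact ⟨by simp only [hc'] at hz; linarith [hz.1], by simp only [hd'] at hz; linarith [hz.2]⟩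
  have hlen : d' - c' < ε₀ := by
    have : δ ≤ ε₀ / 4 := min_le_right _ _
    simp only [hc', hd']; linarith
  -- the rigidity property
  have P : ∀ z ∈ Ioo c' d', ∀ g : G, φ g z ∈ Ioo c' d' → φ g z = z := by
    intro z hz g hgz
    have hzB := hsub hz
    have hgzB := hsub hgz
    rcases i₀ with n | n
    · have hn' : (n : ℝ) = (n₀ : ℝ) := by simp [hn₀]
      simp only [hBdef, Sum.elim_inl, hBp, mem_iInter, mem_setOf_eq] at hzB hgzB
      have hle : φ g z ≤ z := by
        by_contra hlt
        push_neg at hlt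
        refine hzB g ⟨hlt, ?_⟩
        rw [hn']
        obtain ⟨hz1, hz2⟩ := hz; obtain ⟨hg1, hg2⟩ := hgz
        simp only [← hε₀]
        linarith
      have hge : z ≤ φ g z := by
        by_contra hlt
        push_neg at hlt
        refine hgzB g⁻¹ ?_
        rw [inv_apply, hn']
        obtain ⟨hz1, hz2⟩ := hz; obtain ⟨hg1, hg2⟩ := hgz
        simp only [← hε₀]
        exact ⟨hlt, by linarith⟩
      linarith
    · have hn' : (n : ℝ) = (n₀ : ℝ) := by simp [hn₀]
      simp only [hBdef, Sum.elim_inr, hBm, mem_iInter, mem_setOf_eq] at hzB hgzB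
      have hge : z ≤ φ g z := by
        by_contra hlt
        push_neg at hlt
        refine hzB g ⟨?_, hlt⟩
        rw [hn']
        obtain ⟨hz1, hz2⟩ := hz; obtain ⟨hg1, hg2⟩ := hgz
        simp only [← hε₀]
        linarith
      have hle : φ g z ≤ z := by
        by_contra hlt
        push_neg at hlt
        refine hgzB g⁻¹ ?_
        rw [inv_apply, hn']
        obtain ⟨hz1, hz2⟩ := hz; obtain ⟨hg1, hg2⟩ := hgz
        simp only [← hε₀]
        exact ⟨by linarith, hlt⟩
      linarith
  exact key_rigid φ P hc'd' (hnw c' d' hc'd')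

end PartA

section PartB

variable (φ : G →* (ℝ ≃o ℝ)) (x : ℝ)

/-- The orbit of `x`. -/
def Orb : Set ℝ := Set.range (fun g : G => φ g x)

variable {φ x}

lemma orb_apply_mem {y : ℝ} (hy : y ∈ Orb φ x) (g : G) : φ g y ∈ Orb φ x := by
  obtain ⟨h, rfl⟩ := hy
  exact ⟨g * h, (mul_apply' φ g h x)⟩

lemma orb_self : x ∈ Orb φ x := ⟨1, by show φ (1 : G) x = x; rw [map_one]; rfl⟩

lemma orb_acc_above (hx : Good φ x) {y : ℝ} (hy : y ∈ Orb φ x) {ε : ℝ} (hε : 0 < ε) :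
    ∃ z ∈ Orb φ x, y < z ∧ z < y + ε := by
  obtain ⟨h, rfl⟩ := hy
  set y := φ h x with hy
  have hx' : φ h⁻¹ y = x := inv_apply φ h x
  set ε' := φ h⁻¹ (y + ε) - x with hε'
  have hε'pos : 0 < ε' := by
    have h1 : φ h⁻¹ y < φ h⁻¹ (y + ε) := (φ h⁻¹).strictMono (by linarith)
    rw [hx'] at h1
    simp only [hε']
    linarith
  obtain ⟨⟨g, hg⟩, -⟩ := hx ε' hε'pos
  refine ⟨φ h (φ g x), orb_apply_mem ⟨g, rfl⟩ h, ?_, ?_⟩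
  · have := (φ h).strictMono hg.1
    rwa [← hy] at this
  · have h2 : φ g x < φ h⁻¹ (y + ε) := by
      have := hg.2
      simp only [hε'] at this
      linarith
    have h3 := (φ h).strictMono h2
    rwa [apply_inv φ h] at h3

lemma orb_acc_below (hx : Good φ x) {y : ℝ} (hy : y ∈ Orb φ x) {ε : ℝ} (hε : 0 < ε) :
    ∃ z ∈ Orb φ x, y - ε < z ∧ z < y := by
  obtain ⟨h, rfl⟩ := hy
  set y := φ h x with hy
  have hx' : φ h⁻¹ y = x := inv_apply φ h x
  set ε' := x - φ h⁻¹ (y - ε) with hε'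
  have hε'pos : 0 < ε' := by
    have h1 : φ h⁻¹ (y - ε) < φ h⁻¹ y := (φ h⁻¹).strictMono (by linarith)
    rw [hx'] at h1
    simp only [hε']
    linarith
  obtain ⟨-, ⟨g, hg⟩⟩ := hx ε' hε'pos
  refine ⟨φ h (φ g x), orb_apply_mem ⟨g, rfl⟩ h, ?_, ?_⟩
  · have h2 : φ h⁻¹ (y - ε) < φ g x := by
      have := hg.1
      simp only [hε'] at this
      linarith
    have h3 := (φ h).strictMono h2
    rwa [apply_inv φ h] at h3
  · have := (φ h).strictMono hg.2
    rwa [← hy] at this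

lemma orb_btwn (hx : Good φ x) {y y' : ℝ} (hy : y ∈ Orb φ x) (hy' : y' ∈ Orb φ x)
    (h : y < y') : ∃ z ∈ Orb φ x, y < z ∧ z < y' := by
  obtain ⟨z, hz, h1, h2⟩ := orb_acc_above hx hy (sub_pos.2 h)
  exact ⟨z, hz, h1, by linarith⟩

lemma orb_above (hx : Good φ x) {y : ℝ} (hy : y ∈ Orb φ x) : ∃ z ∈ Orb φ x, y < z := by
  obtain ⟨z, hz, h1, -⟩ := orb_acc_above hx hy one_pos
  exact ⟨z, hz, h1⟩

lemma orb_below (hx : Good φ x) {y : ℝ} (hy : y ∈ Orb φ x) : ∃ z ∈ Orb φ x, z < y := by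
  obtain ⟨z, hz, -, h2⟩ := orb_acc_below hx hy one_pos
  exact ⟨z, hz, h2⟩

variable (φ x) in
/-- A countable subset of the orbit which is order-dense in it. -/
def DSet : Set ℝ :=
  ⋃ (p : ℚ × ℚ) (h : (Orb φ x ∩ Set.Ioo (p.1 : ℝ) (p.2 : ℝ)).Nonempty), {h.choose}

lemma DSet_countable : (DSet φ x).Countable :=
  Set.countable_iUnion fun _ =>
    Set.countable_iUnion fun _ => Set.countable_singleton _

lemma DSet_subset : DSet φ x ⊆ Orb φ x := by
  intro d hd
  simp only [DSet, Set.mem_iUnion] at hd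
  obtain ⟨p, h, hd⟩ := hd
  rw [Set.mem_singleton_iff] at hd
  rw [hd]
  exact h.choose_spec.1

lemma DSet_btwn (hx : Good φ x) {y y' : ℝ} (hy : y ∈ Orb φ x) (hy' : y' ∈ Orb φ x)
    (h : y < y') : ∃ d ∈ DSet φ x, y < d ∧ d < y' := by
  obtain ⟨z, hz, hz1, hz2⟩ := orb_btwn hx hy hy' h
  obtain ⟨r, hr1, hr2⟩ := exists_rat_btwn hz1
  obtain ⟨s, hs1, hs2⟩ := exists_rat_btwn hz2
  have hne : (Orb φ x ∩ Set.Ioo ((r : ℝ)) ((s : ℝ))).Nonempty := ⟨z, hz, hr2, hs1⟩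
  refine ⟨hne.choose, ?_, ?_, ?_⟩
  · simp only [DSet, Set.mem_iUnion]
    exact ⟨(r, s), hne, rfl⟩
  · exact lt_trans hr1 hne.choose_spec.2.1
  · exact lt_trans hne.choose_spec.2.2 hs2

/-- From a good point we construct a topologically transitive action. -/
lemma transitive_of_good (φ : G →* (ℝ ≃o ℝ)) (x : ℝ) (hx : Good φ x) :
    ∃ ψ : G →* (ℝ ≃o ℝ), IsTopTransitive ψ := by
  classical
  set D := DSet φ x with hD
  haveI : Countable ↥D := (DSet_countable (φ := φ) (x := x)).to_subtype
  haveI : DenselyOrdered ↥D := by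
    constructor
    rintro ⟨a, ha⟩ ⟨b, hb⟩ hab
    have hab' : a < b := hab
    obtain ⟨d, hd, h1, h2⟩ := DSet_btwn hx (DSet_subset ha) (DSet_subset hb) hab'
    exact ⟨⟨d, hd⟩, h1, h2⟩
  haveI : NoMaxOrder ↥D := by
    constructor
    rintro ⟨a, ha⟩
    obtain ⟨z, hz, h1⟩ := orb_above hx (DSet_subset ha)
    obtain ⟨d, hd, h2, h3⟩ := DSet_btwn hx (DSet_subset ha) hz h1
    exact ⟨⟨d, hd⟩, h2⟩
  haveI : NoMinOrder ↥D := by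
    constructor
    rintro ⟨a, ha⟩
    obtain ⟨z, hz, h1⟩ := orb_below hx (DSet_subset ha)
    obtain ⟨d, hd, h2, h3⟩ := DSet_btwn hx hz (DSet_subset ha) h1
    exact ⟨⟨d, hd⟩, h3⟩
  haveI : Nonempty ↥D := by
    obtain ⟨z, hz, h1⟩ := orb_above hx (orb_self (φ := φ) (x := x))
    obtain ⟨d, hd, -, -⟩ := DSet_btwn hx (orb_self (φ := φ) (x := x)) hz h1
    exact ⟨⟨d, hd⟩⟩
  obtain ⟨e⟩ := Order.iso_of_countable_dense ℚ ↥D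
  set ι : ℚ → ℝ := fun q => ((e q : ↥D) : ℝ) with hι
  have hιmono : StrictMono ι := by
    intro p q h
    have : e p < e q := e.strictMono h
    exact_mod_cast this
  have hιlt : ∀ {p q : ℚ}, ι p < ι q ↔ p < q := fun {p q} => hιmono.lt_iff_lt
  have hιO : ∀ q, ι q ∈ Orb φ x := fun q => DSet_subset (e q).2
  have ex_btwn : ∀ {y y' : ℝ}, y ∈ Orb φ x → y' ∈ Orb φ x → y < y' →
      ∃ q : ℚ, y < ι q ∧ ι q < y' := by
    intro y y' hy hy' h
    obtain ⟨d, hd, h1, h2⟩ := DSet_btwn hx hy hy' h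
    refine ⟨e.symm ⟨d, hd⟩, ?_, ?_⟩
    · simpa only [hι, e.apply_symm_apply] using h1
    · simpa only [hι, e.apply_symm_apply] using h2
  have ex_above : ∀ {y : ℝ}, y ∈ Orb φ x → ∃ q : ℚ, y < ι q := by
    intro y hy
    obtain ⟨z, hz, h1⟩ := orb_above hx hy
    obtain ⟨q, hq, -⟩ := ex_btwn hy hz h1
    exact ⟨q, hq⟩
  have ex_below : ∀ {y : ℝ}, y ∈ Orb φ x → ∃ q : ℚ, ι q < y := by
    intro y hy
    obtain ⟨z, hz, h1⟩ := orb_below hx hy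
    obtain ⟨q, -, hq⟩ := ex_btwn hz hy h1
    exact ⟨q, hq⟩
  -- the induced action on the completion of the orbit, in ℚ-coordinates
  set S : G → ℝ → Set ℝ :=
    fun g t => {z | ∃ p q : ℚ, z = (p : ℝ) ∧ (q : ℝ) < t ∧ ι p < φ g (ι q)} with hS
  set F : G → ℝ → ℝ := fun g t => sSup (S g t) with hF
  have hSne : ∀ g t, (S g t).Nonempty := by
    intro g t
    obtain ⟨q, hq⟩ := exists_rat_lt t
    obtain ⟨p, hp⟩ := ex_below (orb_apply_mem (hιO q) g)
    exact ⟨(p : ℝ), p, q, rfl, hq, hp⟩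
  have hSbdd : ∀ g t, BddAbove (S g t) := by
    intro g t
    obtain ⟨q₁, hq₁⟩ := exists_rat_gt t
    obtain ⟨pb, hpb⟩ := ex_above (orb_apply_mem (hιO q₁) g)
    refine ⟨(pb : ℝ), ?_⟩
    rintro z ⟨p, q, rfl, hqt, hpq⟩
    have hqq₁ : q < q₁ := by exact_mod_cast lt_trans hqt hq₁
    have : ι p < ι pb :=
      lt_trans (lt_trans hpq ((φ g).strictMono (hιmono hqq₁))) hpb
    exact_mod_cast le_of_lt (hιlt.1 this)
  have hFle : ∀ (g : G) (t : ℝ) (q₁ p₁ : ℚ), t ≤ (q₁ : ℝ) → φ g (ι q₁) ≤ ι p₁ →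
      F g t ≤ (p₁ : ℝ) := by
    intro g t q₁ p₁ ht h1
    refine csSup_le (hSne g t) ?_
    rintro z ⟨p, q, rfl, hqt, hpq⟩
    have hqq₁ : q < q₁ := by exact_mod_cast lt_of_lt_of_le hqt ht
    have : ι p < ι p₁ := lt_of_lt_of_le (lt_trans hpq ((φ g).strictMono (hιmono hqq₁))) h1
    exact_mod_cast le_of_lt (hιlt.1 this)
  have hFge : ∀ (g : G) (t : ℝ) (p q : ℚ), (q : ℝ) < t → ι p ≤ φ g (ι q) →
      (p : ℝ) ≤ F g t := by
    intro g t p q hqt hp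
    refine le_of_rat_lt ?_
    intro c hc
    have hcp : c < p := by exact_mod_cast hc
    refine le_csSup (hSbdd g t) ⟨c, q, rfl, hqt, lt_of_lt_of_le (hιmono hcp) hp⟩
  have hφone : ∀ z : ℝ, φ (1 : G) z = z := by
    intro z; rw [map_one]; rfl
  have hFone : ∀ t, F 1 t = t := by
    intro t
    refine le_antisymm ?_ ?_
    · refine csSup_le (hSne 1 t) ?_
      rintro z ⟨p, q, rfl, hqt, hpq⟩
      rw [hφone] at hpq
      have : p < q := hιlt.1 hpq
      have : (p : ℝ) < (q : ℝ) := by exact_mod_cast this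
      linarith
    · refine le_of_rat_lt ?_
      intro c hc
      obtain ⟨q, hq1, hq2⟩ := exists_rat_btwn hc
      have hcq : c < q := by exact_mod_cast hq1
      refine le_csSup (hSbdd 1 t) ⟨c, q, rfl, hq2, ?_⟩
      rw [hφone]
      exact hιmono hcq
  have hFmul : ∀ (g h : G) (t : ℝ), F g (F h t) = F (g * h) t := by
    intro g h t
    refine le_antisymm ?_ ?_
    · refine csSup_le (hSne g (F h t)) ?_
      rintro z ⟨p, q, rfl, hqF, hpq⟩
      obtain ⟨z', hz'S, hqz'⟩ := exists_lt_of_lt_csSup (hSne h t) hqF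
      obtain ⟨p', q', rfl, hq't, hp'q'⟩ := hz'S
      have hqp' : q < p' := by exact_mod_cast hqz'
      have hchain : ι p < φ (g * h) (ι q') := by
        rw [mul_apply']
        calc ι p < φ g (ι q) := hpq
          _ < φ g (ι p') := (φ g).strictMono (hιmono hqp')
          _ < φ g (φ h (ι q')) := (φ g).strictMono hp'q'
      exact le_csSup (hSbdd (g * h) t) ⟨p, q', rfl, hq't, hchain⟩
    · refine csSup_le (hSne (g * h) t) ?_
      rintro z ⟨p, q', rfl, hq't, hp⟩
      rw [mul_apply'] at hp
      set Z := φ g⁻¹ (ι p) with hZ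
      have hZO : Z ∈ Orb φ x := orb_apply_mem (hιO p) g⁻¹
      set Y := φ h (ι q') with hY
      have hYO : Y ∈ Orb φ x := orb_apply_mem (hιO q') h
      have hgZ : φ g Z = ι p := apply_inv φ g (ι p)
      have hZY : Z < Y := by
        have : φ g Z < φ g Y := by rw [hgZ]; exact hp
        exact (φ g).strictMono.lt_iff_lt.1 this
      obtain ⟨qa, hqa1, hqa2⟩ := ex_btwn hZO hYO hZY
      obtain ⟨qb, hqb1, hqb2⟩ := ex_btwn (hιO qa) hYO hqa2
      have h1 : (qb : ℝ) ≤ F h t := hFge h t qb q' hq't (le_of_lt hqb2)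
      have h2 : (qa : ℝ) < F h t := by
        have : qa < qb := hιlt.1 hqb1
        have : (qa : ℝ) < (qb : ℝ) := by exact_mod_cast this
        linarith
      have h3 : ι p < φ g (ι qa) := by
        rw [← hgZ]
        exact (φ g).strictMono hqa1
      exact le_csSup (hSbdd g (F h t)) ⟨p, qa, rfl, h2, h3⟩
  have hFmono : ∀ g : G, StrictMono (F g) := by
    intro g t t' htt'
    obtain ⟨q1, hq11, hq12⟩ := exists_rat_btwn htt'
    obtain ⟨q2, hq21, hq22⟩ := exists_rat_btwn hq12
    have hq1q2 : q1 < q2 := by exact_mod_cast hq21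
    have hYY' : φ g (ι q1) < φ g (ι q2) := (φ g).strictMono (hιmono hq1q2)
    obtain ⟨qa, hqa1, hqa2⟩ :=
      ex_btwn (orb_apply_mem (hιO q1) g) (orb_apply_mem (hιO q2) g) hYY'
    obtain ⟨qb, hqb1, hqb2⟩ := ex_btwn (hιO qa) (orb_apply_mem (hιO q2) g) hqa2
    have h1 : F g t ≤ (qa : ℝ) := hFle g t q1 qa (le_of_lt hq11) (le_of_lt hqa1)
    have h2 : (qb : ℝ) ≤ F g t' := hFge g t' qb q2 hq22 (le_of_lt hqb2)
    have h3 : (qa : ℝ) < (qb : ℝ) := by exact_mod_cast hιlt.1 hqb1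
    linarith
  have hFlinv : ∀ (g : G) (t : ℝ), F g⁻¹ (F g t) = t := by
    intro g t
    rw [hFmul, inv_mul_cancel, hFone]
  have hFrinv : ∀ (g : G) (t : ℝ), F g (F g⁻¹ t) = t := by
    intro g t
    rw [hFmul, mul_inv_cancel, hFone]
  set Ψ : G → (ℝ ≃o ℝ) := fun g =>
    ⟨⟨F g, F g⁻¹, fun t => hFlinv g t, fun t => hFrinv g t⟩, (hFmono _).le_iff_le⟩ with hΨ
  have hΨapp : ∀ (g : G) (t : ℝ), Ψ g t = F g t := fun g t => rfl
  set ψ : G →* (ℝ ≃o ℝ) :=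
    { toFun := Ψ
      map_one' := by
        apply DFunLike.ext
        intro t
        exact hFone t
      map_mul' := by
        intro g h
        apply DFunLike.ext
        intro t
        exact (hFmul g h t).symm } with hψ
  refine ⟨ψ, ?_⟩
  rintro U V hU hV ⟨u₀, hu₀⟩ ⟨v₀, hv₀⟩
  obtain ⟨ru, hru, hbu⟩ := Metric.isOpen_iff.1 hU u₀ hu₀
  obtain ⟨rv, hrv, hbv⟩ := Metric.isOpen_iff.1 hV v₀ hv₀
  have hIU : Set.Ioo (u₀ - ru) (u₀ + ru) ⊆ U := by
    rw [← Real.ball_eq_Ioo]; exact hbu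
  have hIV : Set.Ioo (v₀ - rv) (v₀ + rv) ⊆ V := by
    rw [← Real.ball_eq_Ioo]; exact hbv
  obtain ⟨q₀, hq₀1, hq₀2⟩ := exists_rat_btwn (show u₀ - ru < u₀ by linarith)
  obtain ⟨pm, hpm1, hpm2⟩ := exists_rat_btwn (show v₀ - rv < v₀ by linarith)
  obtain ⟨pc, hpc1, hpc2⟩ := exists_rat_btwn hpm2
  obtain ⟨h₁, hh₁⟩ := hιO q₀
  obtain ⟨h₂, hh₂⟩ := hιO pm
  set g : G := h₂ * h₁⁻¹ with hg
  have hgq₀ : φ g (ι q₀) = ι pm := by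
    rw [hg, mul_apply', ← hh₁]
    show φ h₂ (φ h₁⁻¹ ((fun g => φ g x) h₁)) = ι pm
    simp only []
    rw [inv_apply]
    exact hh₂
  set Y := φ g⁻¹ (ι pc) with hY
  have hYO : Y ∈ Orb φ x := orb_apply_mem (hιO pc) g⁻¹
  have hgY : φ g Y = ι pc := apply_inv φ g (ι pc)
  have hpmpc : ι pm < ι pc := hιmono (by exact_mod_cast hpc1)
  have hq₀Y : ι q₀ < Y := by
    have : φ g (ι q₀) < φ g Y := by rw [hgq₀, hgY]; exact hpmpc
    exact (φ g).strictMono.lt_iff_lt.1 this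
  obtain ⟨qbar, hqbar1, hqbar2⟩ := ex_btwn (hιO q₀) hYO hq₀Y
  have hq₀qbar : (q₀ : ℝ) < (qbar : ℝ) := by exact_mod_cast hιlt.1 hqbar1
  set M := min ((qbar : ℝ)) (u₀ + ru) with hM
  have hq₀M : (q₀ : ℝ) < M := lt_min hq₀qbar (by linarith)
  set t := ((q₀ : ℝ) + M) / 2 with ht
  have ht1 : (q₀ : ℝ) < t := by simp only [ht]; linarith
  have ht2 : t < M := by simp only [ht]; linarith
  have htqbar : t ≤ (qbar : ℝ) := le_of_lt (lt_of_lt_of_le ht2 (min_le_left _ _))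
  have htU : t ∈ U := by
    refine hIU ⟨?_, ?_⟩
    · linarith
    · exact lt_of_lt_of_le ht2 (min_le_right _ _)
  have hlow : (pm : ℝ) ≤ F g t := hFge g t pm q₀ ht1 (le_of_eq hgq₀.symm)
  have hhigh : F g t ≤ (pc : ℝ) := by
    refine hFle g t qbar pc htqbar ?_
    have : φ g (ι qbar) < φ g Y := (φ g).strictMono hqbar2
    rw [hgY] at this
    exact le_of_lt this
  refine ⟨g, F g t, ⟨t, htU, rfl⟩, hIV ⟨?_, ?_⟩⟩
  · linarith
  · linarith

end PartB

end Stmt9Aux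

theorem stmt_9 (G : Type*) [Group G] :
    (∃ φ : G →* (ℝ ≃o ℝ), IsTopTransitive φ) ∨
      ∀ φ : G →* (ℝ ≃o ℝ), HasWanderingInterval φ := by
  by_cases h : ∀ φ : G →* (ℝ ≃o ℝ), HasWanderingInterval φ
  · exact Or.inr h
  · left
    push_neg at h
    obtain ⟨φ, hφ⟩ := h
    have hnw : ∀ a b : ℝ, a < b → ∃ g : G, (∃ y ∈ Set.Ioo a b, φ g y ≠ y) ∧
        ((φ g '' Set.Ioo a b) ∩ Set.Ioo a b).Nonempty := by
      intro a b hab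
      rcases Classical.em (∃ g : G, (∃ y ∈ Set.Ioo a b, φ g y ≠ y) ∧
          ((φ g '' Set.Ioo a b) ∩ Set.Ioo a b).Nonempty) with h' | h'
      · exact h'
      · exfalso
        apply hφ
        refine ⟨a, b, hab, fun g => ?_⟩
        by_cases hid : ∀ y ∈ Set.Ioo a b, φ g y = y
        · exact Or.inl hid
        · refine Or.inr ?_
          by_contra hne
          rw [← ne_eq, ← Set.nonempty_iff_ne_empty] at hne
          push_neg at hid
          exact h' ⟨g, hid, hne⟩
    obtain ⟨x, hgood⟩ := Stmt9Aux.exists_good φ hnw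
    exact Stmt9Aux.transitive_of_good φ x hgood
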